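/- Let Σ be a signed simple graph with even chromatic number χ(Σ) = 2k, let κ be a minimal proper coloration of Σ, and suppose the color i of the color set {±1,…,±k} is not used by κ. Then there is a negative edge of Σ both of whose endpoints are colored −i; in particular at least two vertices are colored −i. -/

import Mathlib

/-- A signed simple graph: two edge-disjoint simple graphs on the same vertex set,
the positive edges and the negative edges. -/
structure SignedGraph (V : Type*) where
  pos : SimpleGraph V
  neg : SimpleGraph V
  disjoint : ∀ a b : V, ¬ (pos.Adj a b ∧ neg.Adj a b)

/-- The color set of size `n`: `{±1, …, ±k}` if `n = 2k`, and `{0, ±1, …, ±k}` if `n = 2k+1`. -/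
noncomputable def signedColorSet (n : ℕ) : Finset ℤ :=
  if Even n then (Finset.Icc (-((n / 2 : ℕ) : ℤ)) ((n / 2 : ℕ) : ℤ)).erase 0
  else Finset.Icc (-((n / 2 : ℕ) : ℤ)) ((n / 2 : ℕ) : ℤ)

/-- A proper coloration of a signed graph using the color set of size `n`. -/
def IsProperColoration {V : Type*} (S : SignedGraph V) (n : ℕ) (κ : V → ℤ) : Prop :=
  (∀ v, κ v ∈ signedColorSet n) ∧
  (∀ a b, S.pos.Adj a b → κ a ≠ κ b) ∧
  (∀ a b, S.neg.Adj a b → κ a ≠ -κ b)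

/-- The chromatic number: the least size of a color set admitting a proper coloration. -/
noncomputable def sChromaticNumber {V : Type*} (S : SignedGraph V) : ℕ :=
  sInf {n : ℕ | ∃ κ : V → ℤ, IsProperColoration S n κ}

/-- A minimal coloration: a proper coloration using the color set of size `χ(Σ)`. -/
def IsMinimalColoration {V : Type*} (S : SignedGraph V) (κ : V → ℤ) : Prop :=
  IsProperColoration S (sChromaticNumber S) κ

/-- The deficiency of a coloration: the number of unused colors from the color set of size `n`. -/
noncomputable def sDeficiency {V : Type*} [Fintype V] (n : ℕ) (κ : V → ℤ) : ℕ :=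
  (signedColorSet n \ Finset.image κ Finset.univ).card

/-- Maximum deficiency over minimal colorations. -/
noncomputable def maxDef {V : Type*} [Fintype V] (S : SignedGraph V) : ℕ :=
  sSup {d : ℕ | ∃ κ : V → ℤ, IsMinimalColoration S κ ∧ sDeficiency (sChromaticNumber S) κ = d}

/-- Minimum deficiency over minimal colorations. -/
noncomputable def minDef {V : Type*} [Fintype V] (S : SignedGraph V) : ℕ :=
  sInf {d : ℕ | ∃ κ : V → ℤ, IsMinimalColoration S κ ∧ sDeficiency (sChromaticNumber S) κ = d}

/-- A stable cover of the positive edges: a vertex cover of `E⁺` that is stable in `Σ`. -/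
def IsStableCover {V : Type*} (S : SignedGraph V) (T : Set V) : Prop :=
  (∀ a b, S.pos.Adj a b → a ∈ T ∨ b ∈ T) ∧
  (∀ a ∈ T, ∀ b ∈ T, ¬ S.pos.Adj a b ∧ ¬ S.neg.Adj a b)

/-- An edge `ab` has exactly one endpoint in `A`. -/
def crossing {V : Type*} (A : Set V) (a b : V) : Prop := ¬ ((a ∈ A) ↔ (b ∈ A))

/-- Switching a signed graph at a vertex set `A`: the sign of every edge with exactly one
endpoint in `A` is negated. -/
def SignedGraph.switch {V : Type*} (S : SignedGraph V) (A : Set V) : SignedGraph V where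
  pos :=
    { Adj := fun a b => (S.pos.Adj a b ∧ ¬ crossing A a b) ∨ (S.neg.Adj a b ∧ crossing A a b)
      symm := by
        constructor
        intro a b h
        unfold crossing at *
        rcases h with ⟨h1, h2⟩ | ⟨h1, h2⟩
        · exact Or.inl ⟨h1.symm, by tauto⟩
        · exact Or.inr ⟨h1.symm, by tauto⟩
      loopless := by
        constructor
        intro a h
        rcases h with ⟨h1, _⟩ | ⟨_, h2⟩
        · exact S.pos.loopless.irrefl a h1
        · exact h2 Iff.rfl }
  neg :=
    { Adj := fun a b => (S.neg.Adj a b ∧ ¬ crossing A a b) ∨ (S.pos.Adj a b ∧ crossing A a b)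
      symm := by
        constructor
        intro a b h
        unfold crossing at *
        rcases h with ⟨h1, h2⟩ | ⟨h1, h2⟩
        · exact Or.inl ⟨h1.symm, by tauto⟩
        · exact Or.inr ⟨h1.symm, by tauto⟩
      loopless := by
        constructor
        intro a h
        rcases h with ⟨h1, _⟩ | ⟨_, h2⟩
        · exact S.neg.loopless.irrefl a h1
        · exact h2 Iff.rfl }
  disjoint := by
    intro a b h
    have := S.disjoint a b
    tauto

/-- General proper coloration with an arbitrary color set `C ⊆ ℤ`. -/
def IsProperWith {V : Type*} (S : SignedGraph V) (C : Set ℤ) (κ : V → ℤ) : Prop :=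
  (∀ v, κ v ∈ C) ∧
  (∀ a b, S.pos.Adj a b → κ a ≠ κ b) ∧
  (∀ a b, S.neg.Adj a b → κ a ≠ -κ b)

open Classical in
/-- The coloration switching equivalent to `κ` via `A`: negate the colors on `A`. -/
noncomputable def switchColor {V : Type*} (A : Set V) (κ : V → ℤ) : V → ℤ :=
  fun v => if v ∈ A then -κ v else κ v

/-- The adjacency of the forcing graph `F(Σ)` for the matching `m`:
a directed edge from `x` to `y` whenever `x ȳ` is a negative edge. -/
def ForcingAdj {V : Type*} (S : SignedGraph V) (m : V → V) (x y : V) : Prop :=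
  S.neg.Adj x (m y)


/-- If `χ(Σ) = 2k`, `κ` is a minimal coloration, and the color `i` of the
color set is unused, then some negative edge has both endpoints colored `-i`;
in particular at least two vertices are colored `-i`. -/
theorem unused_color_even {V : Type*} [Fintype V] (S : SignedGraph V) (k : ℕ)
    (h : sChromaticNumber S = 2 * k)
    (κ : V → ℤ) (hκ : IsMinimalColoration S κ)
    (i : ℤ) (hi : i ∈ signedColorSet (2 * k)) (hiu : ∀ v, κ v ≠ i) :
    (∃ a b : V, S.neg.Adj a b ∧ κ a = -i ∧ κ b = -i) ∧
      (∃ a b : V, a ≠ b ∧ κ a = -i ∧ κ b = -i) := by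
  classical
  have hκ2 : IsProperColoration S (2 * k) κ := by
    have := hκ
    unfold IsMinimalColoration at this
    rwa [h] at this
  obtain ⟨hmem, hpos, hneg⟩ := hκ2
  have hcs : signedColorSet (2 * k) = (Finset.Icc (-(k : ℤ)) (k : ℤ)).erase 0 := by
    simp [signedColorSet, even_two_mul, Nat.mul_div_cancel_left]
  have hifacts : i ≠ 0 ∧ -(k : ℤ) ≤ i ∧ i ≤ (k : ℤ) := by
    rw [hcs, Finset.mem_erase, Finset.mem_Icc] at hi
    tauto
  obtain ⟨hi0, hil, hir⟩ := hifacts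
  have hk1 : 1 ≤ k := by omega
  have hms : ∀ v, κ v ≠ 0 ∧ -(k : ℤ) ≤ κ v ∧ κ v ≤ (k : ℤ) := by
    intro v
    have := hmem v
    rw [hcs, Finset.mem_erase, Finset.mem_Icc] at this
    tauto
  have key : ∃ a b, S.neg.Adj a b ∧ κ a = -i ∧ κ b = -i := by
    by_contra hc
    push_neg at hc
    set K : ℤ := (k : ℤ) with hK
    set j : ℤ := |i| with hj
    have hjor : j = i ∨ j = -i := by
      rcases abs_choice i with h1 | h1
      · exact Or.inl h1
      · exact Or.inr h1
    have hj1 : 1 ≤ j := by have := abs_pos.mpr hi0; omega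
    have hjK : j ≤ K := by rcases hjor with h1 | h1 <;> omega
    set f : ℤ → ℤ := fun x =>
      if x = j then K else if x = -j then -K else if x = K then j else if x = -K then -j else x
      with hf
    set κ' : V → ℤ := fun v => if κ v = -i then 0 else f (κ v) with hκ'
    have hfne0 : ∀ x : ℤ, x ≠ 0 → f x ≠ 0 := by
      intro x hx
      simp only [hf]
      split_ifs <;> omega
    have hfinj : ∀ x y : ℤ, f x = f y → x = y := by
      intro x y
      simp only [hf]
      split_ifs <;> omega
    have hfodd : ∀ x : ℤ, f (-x) = -f x := by
      intro x
      simp only [hf]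
      split_ifs <;> omega
    have hvne : ∀ v, κ v ≠ -i → κ v ≠ j ∧ κ v ≠ -j := by
      intro v hv
      have h1 := hiu v
      rcases hjor with h2 | h2 <;> constructor <;> omega
    have hproper : IsProperColoration S (2 * k - 1) κ' := by
      have he : ¬ Even (2 * k - 1) := by rw [Nat.even_iff]; omega
      have hd : (2 * k - 1) / 2 = k - 1 := by omega
      have hcs' : signedColorSet (2 * k - 1) = Finset.Icc (-(K - 1)) (K - 1) := by
        simp only [signedColorSet, he, if_false, hd]
        congr 1 <;> push_cast [hk1] <;> ring
      refine ⟨?_, ?_, ?_⟩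
      · intro v
        rw [hcs', Finset.mem_Icc]
        simp only [hκ']
        by_cases hv : κ v = -i
        · simp [hv]; omega
        · obtain ⟨h1, h2, h3⟩ := hms v
          obtain ⟨h4, h5⟩ := hvne v hv
          simp only [if_neg hv, hf]
          split_ifs <;> omega
      · intro a b hab
        have hne := hpos a b hab
        simp only [hκ']
        by_cases ha : κ a = -i <;> by_cases hb : κ b = -i
        · exact absurd (ha.trans hb.symm) hne
        · simp only [if_pos ha, if_neg hb]
          exact fun hh => hfne0 _ (hms b).1 hh.symm
        · simp only [if_neg ha, if_pos hb]
          exact hfne0 _ (hms a).1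
        · simp only [if_neg ha, if_neg hb]
          exact fun hh => hne (hfinj _ _ hh)
      · intro a b hab
        have hne := hneg a b hab
        simp only [hκ']
        by_cases ha : κ a = -i <;> by_cases hb : κ b = -i
        · exact absurd hb (hc a b hab ha)
        · simp only [if_pos ha, if_neg hb]
          intro hh
          exact hfne0 _ (hms b).1 (by omega)
        · simp only [if_neg ha, if_pos hb]
          intro hh
          exact hfne0 _ (hms a).1 (by omega)
        · simp only [if_neg ha, if_neg hb]
          intro hh
          rw [← hfodd] at hh
          exact hne (hfinj _ _ hh)
    have hle : sChromaticNumber S ≤ 2 * k - 1 :=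
      Nat.sInf_le ⟨κ', hproper⟩
    omega
  refine ⟨key, ?_⟩
  obtain ⟨a, b, hab, ha, hb⟩ := key
  exact ⟨a, b, fun e => S.neg.loopless.irrefl a (e ▸ hab), ha, hb⟩
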